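/- The affine Fomin–Stanley subspace B' = {a ∈ A_0 : φ_0(a·s) = φ_0(s)·a for all s ∈ S} is closed under multiplication, hence a subalgebra of the affine nilCoxeter algebra. -/

import Mathlib

/-- The constant-term map `φ₀ : Σ c_w A_w ↦ Σ c_w(0) A_w` of the affine nilHecke ring,
expressed via the coefficient map `coeffS` for the `S`-basis `{A_w}` and the evaluation
at zero `π : S → ℤ`. -/
noncomputable def phiZero {S A Waff : Type*} [CommRing S] [Ring A]
    (π : S →+* ℤ) (AW : Waff → A) (coeffS : A → (Waff →₀ S)) (x : A) : A :=
  (coeffS x).sum fun w s => π s • AW w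

/-- The affine nilCoxeter algebra `A₀` inside the nilHecke ring: elements whose
`S`-coefficients in the basis `{A_w}` are integers. -/
def nilCoxSet {S A Waff : Type*} [CommRing S] [Ring A]
    (coeffS : A → (Waff →₀ S)) : Set A :=
  {x : A | ∀ w : Waff, ∃ m : ℤ, coeffS x w = (m : S)}

/-- The affine Fomin–Stanley subspace
`B' = {a ∈ A₀ : φ₀(a·s) = φ₀(s)·a for all s ∈ S}`. -/
def fominStanley {S A Waff : Type*} [CommRing S] [Ring A]
    (π : S →+* ℤ) (ιS : S →+* A) (AW : Waff → A) (coeffS : A → (Waff →₀ S)) : Set A :=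
  {x : A | x ∈ nilCoxSet coeffS ∧
    ∀ s : S, phiZero π AW coeffS (x * ιS s) = π s • x}

/-- The affine Fomin–Stanley subspace `B'` is closed under
multiplication, hence a subalgebra of the affine nilCoxeter algebra. -/
theorem stmt_10
    (S : Type*) [CommRing S] (π : S →+* ℤ)
    (A : Type*) [Ring A] (ιS : S →+* A)
    (Waff : Type*) [Group Waff]
    -- the S-basis {A_w} of the affine nilHecke ring
    (AW : Waff → A) (hAW1 : AW 1 = 1)
    (coeffS : A → (Waff →₀ S))
    (hrepr : ∀ x : A, ((coeffS x).sum fun w s => ιS s * AW w) = x)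
    (hcoeff : ∀ c : Waff →₀ S, coeffS (c.sum fun w s => ιS s * AW w) = c)
    -- products of basis elements of the nilCoxeter algebra
    (hmulAW : ∀ v w : Waff, AW v * AW w = AW (v * w) ∨ AW v * AW w = 0)
    (x y : A)
    (hx : x ∈ fominStanley π ιS AW coeffS)
    (hy : y ∈ fominStanley π ιS AW coeffS) :
    x * y ∈ fominStanley π ιS AW coeffS := by

  classical
  -- notation
  set φ := phiZero π AW coeffS with hφ
  -- coeffS of zero
  have hc0 : coeffS (0 : A) = 0 := by
    have := hcoeff (0 : Waff →₀ S)
    simpa [Finsupp.sum_zero_index] using this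
  have hφ0 : φ 0 = 0 := by
    simp [hφ, phiZero, hc0]
  -- coefficients of a single term
  have hcsingle : ∀ (v : Waff) (s : S), coeffS (ιS s * AW v) = Finsupp.single v s := by
    intro v s
    have := hcoeff (Finsupp.single v s)
    rwa [Finsupp.sum_single_index (by simp)] at this
  have hφsingle : ∀ (v : Waff) (s : S), φ (ιS s * AW v) = π s • AW v := by
    intro v s
    rw [hφ, phiZero, hcsingle, Finsupp.sum_single_index (by simp)]
  -- additivity of the representation map
  have hrepr_add : ∀ c d : Waff →₀ S,
      ((c + d).sum fun w s => ιS s * AW w)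
        = (c.sum fun w s => ιS s * AW w) + (d.sum fun w s => ιS s * AW w) := by
    intro c d
    exact Finsupp.sum_add_index (by simp) (by intro w _ s t; rw [map_add, add_mul])
  -- additivity of coeffS
  have hcadd : ∀ a b : A, coeffS (a + b) = coeffS a + coeffS b := by
    intro a b
    have h := hcoeff (coeffS a + coeffS b)
    rwa [hrepr_add, hrepr, hrepr] at h
  -- additivity of φ
  have hφadd : ∀ a b : A, φ (a + b) = φ a + φ b := by
    intro a b
    rw [hφ, phiZero, hcadd]
    exact Finsupp.sum_add_index (by simp) (by intro w _ s t; rw [map_add, add_smul])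
  -- φ is right-linear over the basis elements AW w
  have L2 : ∀ (w : Waff) (a : A), φ (a * AW w) = φ a * AW w := by
    intro w a
    conv_lhs => rw [← hrepr a]
    conv_rhs => rw [← hrepr a]
    generalize coeffS a = c
    induction c using Finsupp.induction with
    | zero => simp [Finsupp.sum_zero_index, hφ0]
    | single_add v s f hv hs ih =>
        rw [hrepr_add, add_mul, hφadd, hφadd, add_mul, ih]
        congr 1
        rw [Finsupp.sum_single_index (by simp)]
        rw [hφsingle, mul_assoc]
        rcases hmulAW v w with h | h
        · rw [h, hφsingle, smul_mul_assoc, h]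
        · rw [h, mul_zero, hφ0, smul_mul_assoc, h, smul_zero]
  -- key lemma: expanding the right factor
  have LA : ∀ (z : A) (c : Waff →₀ S),
      φ (z * (c.sum fun w s => ιS s * AW w))
        = c.sum fun w s => φ (z * ιS s) * AW w := by
    intro z c
    induction c using Finsupp.induction with
    | zero => simp [Finsupp.sum_zero_index, hφ0]
    | single_add v s f hv hs ih =>
        rw [hrepr_add, mul_add, hφadd, ih,
          Finsupp.sum_add_index (by simp [hφ0]) ?_ ,
          Finsupp.sum_single_index (by simp), Finsupp.sum_single_index (by simp [hφ0]),
          ← mul_assoc, L2]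
        intro w _ s t
        rw [map_add, mul_add, hφadd, add_mul]
  -- the commutation property for the product
  have Hs : ∀ s : S, φ (x * y * ιS s) = π s • (x * y) := by
    intro s
    rw [mul_assoc]
    conv_lhs => rw [← hrepr (y * ιS s)]
    rw [LA x (coeffS (y * ιS s))]
    have h1 : ((coeffS (y * ιS s)).sum fun w t => φ (x * ιS t) * AW w)
        = (coeffS (y * ιS s)).sum fun w t => x * (π t • AW w) := by
      apply Finsupp.sum_congr
      intro w _
      rw [hφ, hx.2, smul_mul_assoc, mul_smul_comm]
    rw [h1, ← Finsupp.mul_sum]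
    have h2 : ((coeffS (y * ιS s)).sum fun w t => π t • AW w) = π s • y := hy.2 s
    rw [h2, mul_smul_comm]
  refine ⟨?_, Hs⟩
  -- integrality: from φ (x*y) = x*y
  have hfix : φ (x * y) = x * y := by
    have := Hs 1
    simpa using this
  intro w
  refine ⟨π (coeffS (x * y) w), ?_⟩
  -- compute coeffS (φ (x*y))
  have hmap : φ (x * y)
      = ((coeffS (x * y)).mapRange (fun s => ((π s : ℤ) : S)) (by simp)).sum
          fun w s => ιS s * AW w := by
    rw [hφ, phiZero, Finsupp.sum_mapRange_index (by simp)]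
    apply Finsupp.sum_congr
    intro v _
    rw [map_intCast, ← zsmul_eq_mul]
  have hcm : coeffS (x * y)
      = (coeffS (x * y)).mapRange (fun s => ((π s : ℤ) : S)) (by simp) := by
    conv_lhs => rw [← hfix, hmap, hcoeff]
  conv_lhs => rw [hcm]
  simp [Finsupp.mapRange_apply]
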